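/- Let f : 𝔽₂^{2n} → ℝ be a function whose symplectic Fourier transform is pointwise nonnegative, i.e., f̂(a) ≥ 0 for all a ∈ 𝔽₂^{2n}. Then for every linear subspace V ⊆ 𝔽₂^{2n} and every z ∈ 𝔽₂^{2n}, Σ_{x ∈ V} f(x) ≥ Σ_{x ∈ V} f(x+z). -/
import Mathlib


open scoped BigOperators ComplexOrder

/-- The phase space `𝔽₂^{2n}`, written as pairs `(a, b)` with `a, b ∈ 𝔽₂ⁿ`. -/
abbrev PhaseSpace (n : ℕ) := (Fin n → ZMod 2) × (Fin n → ZMod 2)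

/-- The symplectic product `[x, y] = a·d + b·c` for `x = (a,b)`, `y = (c,d)`. -/
def sympl {n : ℕ} (x y : PhaseSpace n) : ZMod 2 :=
  ∑ i, x.1 i * y.2 i + ∑ i, x.2 i * y.1 i

/-- The symplectic Fourier transform `f̂(a) = 4^{-n} ∑_x (-1)^{[a,x]} f(x)`. -/
noncomputable def sft {n : ℕ} (f : PhaseSpace n → ℝ) (a : PhaseSpace n) : ℝ :=
  (1 / 4 ^ n) * ∑ x, (-1 : ℝ) ^ (sympl a x).val * f x

/-- The symplectic complement of a set `S ⊆ 𝔽₂^{2n}`. -/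
def symplComplement {n : ℕ} (S : Set (PhaseSpace n)) : Set (PhaseSpace n) :=
  {x | ∀ a ∈ S, sympl x a = 0}

noncomputable def chi (u : ZMod 2) : ℝ := (-1 : ℝ) ^ u.val

lemma zmod2_cases : ∀ u : ZMod 2, u = 0 ∨ u = 1 := by decide

lemma chi_add (u v : ZMod 2) : chi (u + v) = chi u * chi v := by
  rcases zmod2_cases u with hu | hu <;> rcases zmod2_cases v with hv | hv <;>
    subst hu <;> subst hv <;>
    norm_num [chi, show ((1 : ZMod 2) + 1) = 0 from by decide,
      show ((2 : ZMod 2)) = 0 from by decide, show ((2 : ZMod 2)).val = 0 from by decide,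
      show ((0 : ZMod 2)).val = 0 from rfl, show ((1 : ZMod 2)).val = 1 from rfl]

lemma chi_zero : chi 0 = 1 := by norm_num [chi, show (0 : ZMod 2).val = 0 from rfl]
lemma chi_one : chi 1 = -1 := by norm_num [chi, show (1 : ZMod 2).val = 1 from rfl]
lemma chi_le_one (u : ZMod 2) : chi u ≤ 1 := by
  rcases zmod2_cases u with h | h <;> subst h
  · rw [chi_zero]
  · rw [chi_one]; norm_num

lemma sympl_add_right {n : ℕ} (a x y : PhaseSpace n) :
    sympl a (x + y) = sympl a x + sympl a y := by
  simp only [sympl, Prod.fst_add, Prod.snd_add, Pi.add_apply, mul_add,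
    Finset.sum_add_distrib]
  ring

lemma sympl_add_left {n : ℕ} (a x y : PhaseSpace n) :
    sympl (x + y) a = sympl x a + sympl y a := by
  simp only [sympl, Prod.fst_add, Prod.snd_add, Pi.add_apply, add_mul,
    Finset.sum_add_distrib]
  ring

lemma add_self_ps {n : ℕ} (x : PhaseSpace n) : x + x = 0 := by
  have h : ∀ u : ZMod 2, u + u = 0 := by decide
  ext i <;> simp [h]

lemma sympl_zero_right {n : ℕ} (a : PhaseSpace n) : sympl a 0 = 0 := by
  simp [sympl]

lemma card_ps (n : ℕ) : (Fintype.card (PhaseSpace n) : ℝ) = 4 ^ n := by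
  simp only [Fintype.card_prod, Fintype.card_fun, ZMod.card, Fintype.card_fin]
  push_cast
  rw [← mul_pow]
  norm_num

lemma exists_pair_one {n : ℕ} {w : PhaseSpace n} (hw : w ≠ 0) :
    ∃ a : PhaseSpace n, sympl a w = 1 := by
  have hcase : w.1 ≠ 0 ∨ w.2 ≠ 0 := by
    by_contra h
    push_neg at h
    exact hw (Prod.ext h.1 h.2)
  rcases hcase with h | h
  · obtain ⟨i, hi⟩ := Function.ne_iff.mp h
    have hi1 : w.1 i = 1 := by
      rcases zmod2_cases (w.1 i) with h0 | h0
      · exact absurd h0 hi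
      · exact h0
    refine ⟨(0, Pi.single i 1), ?_⟩
    simp [sympl, Pi.single_apply, ite_mul, hi1]
  · obtain ⟨i, hi⟩ := Function.ne_iff.mp h
    have hi1 : w.2 i = 1 := by
      rcases zmod2_cases (w.2 i) with h0 | h0
      · exact absurd h0 hi
      · exact h0
    refine ⟨(Pi.single i 1, 0), ?_⟩
    simp [sympl, Pi.single_apply, ite_mul, hi1]

lemma orth {n : ℕ} (w : PhaseSpace n) :
    ∑ a : PhaseSpace n, chi (sympl a w) = if w = 0 then (4:ℝ)^n else 0 := by
  by_cases hw : w = 0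
  · subst hw
    rw [if_pos rfl]
    simp only [sympl_zero_right, chi_zero]
    rw [Finset.sum_const, Finset.card_univ, nsmul_eq_mul, mul_one, card_ps]
  · rw [if_neg hw]
    obtain ⟨a₀, ha₀⟩ := exists_pair_one hw
    have key : ∑ a : PhaseSpace n, chi (sympl a w)
        = ∑ a : PhaseSpace n, chi (sympl (a + a₀) w) :=
      Fintype.sum_equiv (Equiv.addRight a₀) _ _ (fun a => by
        simp only [Equiv.coe_addRight]
        rw [add_assoc, add_self_ps, add_zero])
    have h2 : ∀ a : PhaseSpace n, chi (sympl (a + a₀) w) = - chi (sympl a w) := by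
      intro a
      rw [sympl_add_left, chi_add, ha₀, chi_one]
      ring
    simp only [h2, Finset.sum_neg_distrib] at key
    linarith

lemma inversion {n : ℕ} (f : PhaseSpace n → ℝ) (x : PhaseSpace n) :
    ∑ a : PhaseSpace n, chi (sympl a x) * sft f a = f x := by
  have step1 : ∀ a : PhaseSpace n, chi (sympl a x) * sft f a
      = (1 / 4 ^ n) * ∑ y, chi (sympl a (x + y)) * f y := by
    intro a
    simp only [sft, Finset.mul_sum]
    apply Finset.sum_congr rfl
    intro y _
    rw [sympl_add_right, chi_add]
    show chi (sympl a x) * ((1/4^n) * (chi (sympl a y) * f y)) = _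
    ring
  simp only [step1]
  rw [← Finset.mul_sum, Finset.sum_comm]
  have step2 : ∀ y : PhaseSpace n,
      ∑ a : PhaseSpace n, chi (sympl a (x + y)) * f y
        = (if x + y = 0 then (4:ℝ)^n else 0) * f y := by
    intro y
    rw [← Finset.sum_mul, orth]
  simp only [step2]
  have hiff : ∀ y : PhaseSpace n, x + y = 0 ↔ y = x := by
    intro y
    constructor
    · intro h
      have := congrArg (x + ·) h
      simpa [← add_assoc, add_self_ps] using this
    · rintro rfl
      exact add_self_ps _
  simp only [hiff, ite_mul, zero_mul]
  rw [Finset.sum_ite_eq' Finset.univ x (fun y => (4:ℝ)^n * f y)]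
  simp only [Finset.mem_univ, if_true]
  field_simp


lemma T_nonneg {n : ℕ} (V : Submodule (ZMod 2) (PhaseSpace n)) (a : PhaseSpace n) :
    0 ≤ ∑ x, (V : Set (PhaseSpace n)).indicator (fun y => chi (sympl a y)) x := by
  by_cases h : ∃ x₀ ∈ V, sympl a x₀ = 1
  · obtain ⟨x₀, hx₀V, hx₀⟩ := h
    have hmem : ∀ x : PhaseSpace n, x ∈ V ↔ x + x₀ ∈ V := by
      intro x
      constructor
      · intro hx; exact V.add_mem hx hx₀V
      · intro hx
        have := V.add_mem hx hx₀V
        rwa [add_assoc, add_self_ps, add_zero] at this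
    set T := ∑ x, (V : Set (PhaseSpace n)).indicator (fun y => chi (sympl a y)) x with hT
    have shift : T = ∑ x, (V : Set (PhaseSpace n)).indicator
        (fun y => chi (sympl a y)) (x + x₀) :=
      Fintype.sum_equiv (Equiv.addRight x₀) _ _
        (fun x => by
          simp only [Equiv.coe_addRight]
          rw [add_assoc, add_self_ps, add_zero])
    have flip : ∑ x, (V : Set (PhaseSpace n)).indicator
        (fun y => chi (sympl a y)) (x + x₀) = -T := by
      rw [hT, ← Finset.sum_neg_distrib]
      apply Finset.sum_congr rfl
      intro x _
      by_cases hx : x ∈ (V : Set (PhaseSpace n))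
      · rw [Set.indicator_of_mem ((hmem x).mp hx), Set.indicator_of_mem hx,
          sympl_add_right, chi_add, hx₀, chi_one]
        ring
      · rw [Set.indicator_of_notMem hx,
          Set.indicator_of_notMem (fun hc => hx ((hmem x).mpr hc))]
        ring
    have key : T = -T := shift.trans flip
    linarith
  · push_neg at h
    apply Finset.sum_nonneg
    intro x _
    apply Set.indicator_nonneg
    intro y hy
    rcases zmod2_cases (sympl a y) with h0 | h0
    · rw [h0, chi_zero]; norm_num
    · exact absurd h0 (h y hy)

lemma coset_sum {n : ℕ} (V : Submodule (ZMod 2) (PhaseSpace n))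
    (c : PhaseSpace n → ℝ) :
    ∑ x, (V : Set (PhaseSpace n)).indicator
        (fun y => ∑ a, chi (sympl a y) * c a) x
      = ∑ a, (∑ x, (V : Set (PhaseSpace n)).indicator
          (fun y => chi (sympl a y)) x) * c a := by
  have h1 : ∀ x, (V : Set (PhaseSpace n)).indicator
      (fun y => ∑ a, chi (sympl a y) * c a) x
      = ∑ a, (V : Set (PhaseSpace n)).indicator (fun y => chi (sympl a y)) x * c a := by
    intro x
    by_cases hx : x ∈ (V : Set (PhaseSpace n))
    · simp only [Set.indicator_of_mem hx]
    · simp only [Set.indicator_of_notMem hx, zero_mul, Finset.sum_const_zero]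
  simp only [h1]
  rw [Finset.sum_comm]
  simp only [← Finset.sum_mul]

/-- If f̂ ≥ 0 pointwise, then for every linear subspace V ⊆ 𝔽₂^{2n}
and every z, ∑_{x ∈ V} f(x) ≥ ∑_{x ∈ V} f(x+z). -/
theorem sum_subspace_ge_sum_coset {n : ℕ} (f : PhaseSpace n → ℝ)
    (hf : ∀ a, 0 ≤ sft f a)
    (V : Submodule (ZMod 2) (PhaseSpace n)) (z : PhaseSpace n) :
    ∑ x, (V : Set (PhaseSpace n)).indicator f x
      ≥ ∑ x, (V : Set (PhaseSpace n)).indicator (fun y => f (y + z)) x := by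
  set c : PhaseSpace n → ℝ := sft f with hc
  have hfG : f = fun y => ∑ a, chi (sympl a y) * c a :=
    funext fun y => (inversion f y).symm
  have hL : ∑ x, (V : Set (PhaseSpace n)).indicator f x
      = ∑ a, (∑ x, (V : Set (PhaseSpace n)).indicator
          (fun y => chi (sympl a y)) x) * c a := by
    conv_lhs => rw [hfG]
    exact coset_sum V c
  have hR : ∑ x, (V : Set (PhaseSpace n)).indicator (fun y => f (y + z)) x
      = ∑ a, (∑ x, (V : Set (PhaseSpace n)).indicator
          (fun y => chi (sympl a y)) x) * (chi (sympl a z) * c a) := by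
    have heq : (fun y => f (y + z))
        = fun y => ∑ a, chi (sympl a y) * (chi (sympl a z) * c a) := by
      funext y
      rw [hfG]
      apply Finset.sum_congr rfl
      intro a _
      rw [sympl_add_right, chi_add]
      ring
    conv_lhs => rw [heq]
    exact coset_sum V _
  rw [ge_iff_le, hL, hR]
  apply Finset.sum_le_sum
  intro a _
  have hT := T_nonneg V a
  have hchi := chi_le_one (sympl a z)
  have hca : 0 ≤ c a := hf a
  have : chi (sympl a z) * c a ≤ c a := by nlinarith
  exact mul_le_mul_of_nonneg_left this hT
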